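/- Let ε ∈ [0, arccos√(2/3)], let τ be a 2×2 positive semidefinite complex matrix of trace 1 with Bloch vector t ∈ ℝ³ (i.e. τ = (𝟙 + t·σ⃗)/2, ‖t‖ ≤ 1), and let n̂₁, n̂₂, n̂₃ ∈ ℝ³ be unit vectors with n̂ₖ·eₖ ≥ cos ε for the standard basis vectors eₖ. Set cₖ = n̂ₖ·t and suppose ‖c‖ ≤ 1, so that ρ = (𝟙 + c·σ⃗)/2 is a density matrix. Then ( tr √(√τ · ρ · √τ) )² ≥ (1 + cos ε − √2·sin ε)/2. -/

import Mathlib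

open Matrix
open scoped ComplexOrder

noncomputable def σx : Matrix (Fin 2) (Fin 2) ℂ := !![0, 1; 1, 0]
noncomputable def σy : Matrix (Fin 2) (Fin 2) ℂ := !![0, -Complex.I; Complex.I, 0]
noncomputable def σz : Matrix (Fin 2) (Fin 2) ℂ := !![1, 0; 0, -1]

/-- v·σ⃗ = v₁σx + v₂σy + v₃σz for v ∈ ℝ³. -/
noncomputable def pvec (v : Fin 3 → ℝ) : Matrix (Fin 2) (Fin 2) ℂ :=
  v 0 • σx + v 1 • σy + v 2 • σz

/-- The old Mathlib `Matrix.PosSemidef.sqrt` (removed), with its original definition. -/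
noncomputable def Matrix.PosSemidef.sqrt {n 𝕜 : Type*} [Fintype n] [RCLike 𝕜] [DecidableEq n]
    {A : Matrix n n 𝕜} (hA : A.PosSemidef) : Matrix n n 𝕜 :=
  hA.1.eigenvectorUnitary.1 * diagonal ((↑) ∘ (√·) ∘ hA.1.eigenvalues) *
    (star hA.1.eigenvectorUnitary : Matrix n n 𝕜)

lemma Matrix.PosSemidef.posSemidef_sqrt {n 𝕜 : Type*} [Fintype n] [RCLike 𝕜] [DecidableEq n]
    {A : Matrix n n 𝕜} (hA : A.PosSemidef) : hA.sqrt.PosSemidef := by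
  unfold Matrix.PosSemidef.sqrt
  have h : (star hA.1.eigenvectorUnitary : Matrix n n 𝕜) = (hA.1.eigenvectorUnitary.1)ᴴ := rfl
  rw [h]
  exact (PosSemidef.diagonal (fun i => RCLike.ofReal_nonneg.mpr (Real.sqrt_nonneg _))).mul_mul_conjTranspose_same _

lemma Matrix.PosSemidef.sqrt_mul_self {n 𝕜 : Type*} [Fintype n] [RCLike 𝕜] [DecidableEq n]
    {A : Matrix n n 𝕜} (hA : A.PosSemidef) : hA.sqrt * hA.sqrt = A := by
  unfold Matrix.PosSemidef.sqrt
  have hU : (star hA.1.eigenvectorUnitary : Matrix n n 𝕜) * hA.1.eigenvectorUnitary.1 = 1 :=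
    Unitary.coe_star_mul_self _
  have hD : diagonal ((↑) ∘ (√·) ∘ hA.1.eigenvalues) * diagonal ((↑) ∘ (√·) ∘ hA.1.eigenvalues)
      = diagonal (RCLike.ofReal ∘ hA.1.eigenvalues : n → 𝕜) := by
    rw [diagonal_mul_diagonal]
    congr 1; funext i
    simp only [Function.comp_apply, ← RCLike.ofReal_mul, Real.mul_self_sqrt (hA.eigenvalues_nonneg i)]
  conv_rhs => rw [hA.1.spectral_theorem]
  rw [Unitary.conjStarAlgAut_apply]
  calc _ = hA.1.eigenvectorUnitary.1 * (diagonal ((↑) ∘ (√·) ∘ hA.1.eigenvalues) *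
        ((star hA.1.eigenvectorUnitary : Matrix n n 𝕜) * hA.1.eigenvectorUnitary.1) *
        diagonal ((↑) ∘ (√·) ∘ hA.1.eigenvalues)) * (star hA.1.eigenvectorUnitary : Matrix n n 𝕜) := by
          simp only [mul_assoc]
    _ = _ := by rw [hU, mul_one, hD]


lemma perk (C S s x c g m : ℝ) (hg0 : 0 ≤ g) (hg : g^2 = s - x^2)
    (hm1 : C ≤ m) (hm2 : m ≤ 1) (hC0 : 0 ≤ C) (hS : 0 ≤ S)
    (hSm : 1 - m^2 ≤ S^2)
    (hy : (c - m*x)^2 ≤ (1-m^2) * g^2) :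
    C*x^2 - S*(abs x*g) ≤ x*c ∧
    c^2 ≤ (1+C)*(x*c) - C*x^2 + (1-C)*(S*(abs x*g)) + S^2*g^2 := by
  have hg2 : 0 ≤ g^2 := sq_nonneg g
  have hy2 : (c - m*x)^2 ≤ (S*g)^2 := by nlinarith
  obtain ⟨hb1, hb2⟩ := abs_le_of_sq_le_sq' hy2 (mul_nonneg hS hg0)
  rcases abs_cases x with ⟨hax, hx0⟩ | ⟨hax, hx0⟩
  · rw [hax]
    constructor
    · nlinarith [mul_nonneg hx0 (by linarith : (0:ℝ) ≤ c - m*x + S*g),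
        mul_nonneg (sub_nonneg.2 hm1) (sq_nonneg x)]
    · have e1 : c ≤ x + S*g := by nlinarith [mul_le_mul_of_nonneg_right hm2 hx0]
      have e2 : C*x - S*g ≤ c := by nlinarith [mul_le_mul_of_nonneg_right hm1 hx0]
      nlinarith [mul_nonneg (by linarith : (0:ℝ) ≤ x + S*g - c)
        (by linarith : (0:ℝ) ≤ c - (C*x - S*g))]
  · rw [hax]
    have hx0' : x ≤ 0 := le_of_lt hx0
    constructor
    · nlinarith [mul_nonneg (by linarith : (0:ℝ) ≤ -x) (by linarith : (0:ℝ) ≤ m*x + S*g - c),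
        mul_nonneg (sub_nonneg.2 hm1) (sq_nonneg x)]
    · have e1 : c ≤ C*x + S*g := by nlinarith [mul_le_mul_of_nonpos_left (hm1) hx0']
      have e2 : x - S*g ≤ c := by nlinarith [mul_le_mul_of_nonpos_left (hm2) hx0']
      nlinarith [mul_nonneg (by linarith : (0:ℝ) ≤ C*x + S*g - c)
        (by linarith : (0:ℝ) ≤ c - (x - S*g))]


lemma core (C S r s P q : ℝ) (hr2 : r^2 = 2) (hr0 : 0 ≤ r)
    (hCS : C^2 + S^2 = 1) (hS : 0 ≤ S) (hC0 : 0 ≤ C) (hC2 : 2/3 ≤ C^2)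
    (hs0 : 0 ≤ s) (hs1 : s ≤ 1) (hq0 : 0 ≤ q) (hq1 : q ≤ 1)
    (hP1 : C*s - S*(r*s) ≤ P) (hPq : P^2 ≤ s*q)
    (hQ : q ≤ (1+C)*P + (-C + (1-C)*S*r + 2*S^2)*s) :
    C - r*S ≤ P + Real.sqrt ((1-s)*(1-q)) := by
  set K : ℝ := C - r*S with hK_def
  have hrS0 : 0 ≤ r*S := mul_nonneg hr0 hS
  have hK0 : 0 ≤ K := by
    rw [hK_def]
    by_contra h
    push_neg at h
    nlinarith [sq_nonneg (r*S)]
  have hC1 : C ≤ 1 := by nlinarith [sq_nonneg S]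
  have hK1 : K ≤ 1 := by rw [hK_def]; linarith
  have hKC : K ≤ C := by rw [hK_def]; linarith
  -- rewrite hQ using K
  have hQ' : q ≤ (1+C)*P + (K^2 - (1+C)*K)*s := by
    have : (-C + (1-C)*S*r + 2*S^2) = K^2 - (1+C)*K := by
      rw [hK_def]; linear_combination (-S^2) * hr2
    linarith [hQ, this ▸ hQ]
  by_cases hPK : K ≤ P
  · linarith [Real.sqrt_nonneg ((1-s)*(1-q))]
  push_neg at hPK
  set β : ℝ := 1 + C - 2*K with hβ_def
  have hβ0 : 0 ≤ β := by rw [hβ_def, hK_def]; linarith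
  set δ : ℝ := P - K*s with hδ_def
  have hδ0 : 0 ≤ δ := by rw [hδ_def, hK_def]; linarith
  have hδK : δ ≤ K*(1-s) := by rw [hδ_def]; nlinarith
  have hδsq : δ^2 ≤ s*β*δ := by
    have h1 : s*q ≤ s*((1+C)*P + (K^2 - (1+C)*K)*s) := mul_le_mul_of_nonneg_left hQ' hs0
    rw [hδ_def, hβ_def]
    nlinarith [hPq]
  have hKβ : K*β ≤ 1 - K^2 := by
    have h2 : 0 ≤ (C - K)*(1 - K) := mul_nonneg (by linarith) (by linarith)
    rw [hβ_def]; nlinarith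
  -- the main bound
  have hF : (K - P)^2 ≤ (1-s)*(1 - ((1+C)*P + (K^2 - (1+C)*K)*s)) := by
    have t1 : δ*((1-s)*β) ≤ (K*(1-s))*((1-s)*β) :=
      mul_le_mul_of_nonneg_right hδK (mul_nonneg (by linarith) hβ0)
    have t2 : s*β*δ ≤ (s*β)*(K*(1-s)) :=
      mul_le_mul_of_nonneg_left hδK (mul_nonneg hs0 hβ0)
    have t3 : (K*β)*(1-s) ≤ (1-K^2)*(1-s) := mul_le_mul_of_nonneg_right hKβ (by linarith)
    have hiden : (1-s)*(1 - ((1+C)*P + (K^2 - (1+C)*K)*s)) - (K - P)^2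
        = (1-s)*(1-K^2) - (δ*((1-s)*β) + δ^2) := by
      rw [hδ_def, hβ_def]; ring
    have t4 : (K*(1-s))*((1-s)*β) + (s*β)*(K*(1-s)) = (K*β)*(1-s) := by ring
    linarith [t1, t2, t3, hδsq, t4, hiden]
  have hF' : (K - P)^2 ≤ (1-s)*(1-q) := by
    have : (1-s)*(1 - ((1+C)*P + (K^2 - (1+C)*K)*s)) ≤ (1-s)*(1-q) :=
      mul_le_mul_of_nonneg_left (by linarith) (by linarith)
    linarith
  have := Real.sqrt_le_sqrt hF'
  rw [Real.sqrt_sq (by linarith : 0 ≤ K - P)] at this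
  linarith

lemma bridge (ε : ℝ) (hε : ε ∈ Set.Icc 0 (Real.arccos (Real.sqrt (2 / 3))))
    (t : Fin 3 → ℝ) (ht : ∑ i, (t i) ^ 2 ≤ 1)
    (nh : Fin 3 → Fin 3 → ℝ)
    (hunit : ∀ k, ∑ i, (nh k i) ^ 2 = 1)
    (hclose : ∀ k, nh k ⬝ᵥ Pi.single k 1 ≥ Real.cos ε)
    (c : Fin 3 → ℝ) (hcdef : ∀ k, c k = nh k ⬝ᵥ t) (hc : ∑ i, (c i) ^ 2 ≤ 1) :
    Real.cos ε - Real.sqrt 2 * Real.sin ε ≤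
      (t 0 * c 0 + t 1 * c 1 + t 2 * c 2) +
      Real.sqrt ((1-((t 0)^2 + (t 1)^2 + (t 2)^2))*(1-((c 0)^2 + (c 1)^2 + (c 2)^2))) := by
  obtain ⟨hε0, hε1⟩ := hε
  have hr2 : (Real.sqrt 2)^2 = 2 := Real.sq_sqrt (by norm_num)
  have hr0 : (0:ℝ) ≤ Real.sqrt 2 := Real.sqrt_nonneg 2
  have hrpos : (0:ℝ) < Real.sqrt 2 := Real.sqrt_pos.mpr (by norm_num)
  have hCS : (Real.cos ε)^2 + (Real.sin ε)^2 = 1 := Real.cos_sq_add_sin_sq ε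
  have hεπ : ε ≤ Real.pi := le_trans hε1 (Real.arccos_le_pi _)
  have hS0 : 0 ≤ Real.sin ε := Real.sin_nonneg_of_nonneg_of_le_pi hε0 hεπ
  have hv1 : Real.sqrt (2/3) ≤ 1 := by
    rw [show (1:ℝ) = Real.sqrt 1 by simp]
    exact Real.sqrt_le_sqrt (by norm_num)
  have hCv : Real.sqrt (2/3) ≤ Real.cos ε := by
    have hm1 : (-1:ℝ) ≤ Real.sqrt (2/3) := le_trans (by norm_num) (Real.sqrt_nonneg _)
    have := Real.cos_le_cos_of_nonneg_of_le_pi hε0 (Real.arccos_le_pi _) hε1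
    rwa [Real.cos_arccos hm1 hv1] at this
  have hC0 : 0 ≤ Real.cos ε := le_trans (Real.sqrt_nonneg _) hCv
  have hC2 : 2/3 ≤ (Real.cos ε)^2 := by
    have h2 : Real.sqrt (2/3) * Real.sqrt (2/3) ≤ Real.cos ε * Real.cos ε :=
      mul_self_le_mul_self (Real.sqrt_nonneg _) hCv
    have h3 : Real.sqrt (2/3) * Real.sqrt (2/3) = 2/3 := Real.mul_self_sqrt (by norm_num)
    have h4 : (Real.cos ε)^2 = Real.cos ε * Real.cos ε := sq (Real.cos ε)
    linarith
  have hC1 : Real.cos ε ≤ 1 := Real.cos_le_one ε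
  have hs1 : (t 0)^2 + (t 1)^2 + (t 2)^2 ≤ 1 := by simpa [Fin.sum_univ_three] using ht
  have hq1 : (c 0)^2 + (c 1)^2 + (c 2)^2 ≤ 1 := by simpa [Fin.sum_univ_three] using hc
  have hs0 : (0:ℝ) ≤ (t 0)^2 + (t 1)^2 + (t 2)^2 := by positivity
  have hq0 : (0:ℝ) ≤ (c 0)^2 + (c 1)^2 + (c 2)^2 := by positivity
  have hcd : ∀ k, c k = nh k 0 * t 0 + nh k 1 * t 1 + nh k 2 * t 2 := by
    intro k; rw [hcdef k]; simp [dotProduct, Fin.sum_univ_three]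
  have hcl : ∀ k, Real.cos ε ≤ nh k k := by
    intro k
    have := hclose k
    simpa [dotProduct, Pi.single_apply, Fin.sum_univ_three] using this
  have hun : ∀ k, (nh k 0)^2 + (nh k 1)^2 + (nh k 2)^2 = 1 := by
    intro k; have := hunit k; simpa [Fin.sum_univ_three] using this
  set g : Fin 3 → ℝ := fun k => Real.sqrt ((t 0)^2 + (t 1)^2 + (t 2)^2 - (t k)^2) with hg_def
  have hg0 : ∀ k, 0 ≤ g k := fun k => Real.sqrt_nonneg _
  have hgsq0 : (g 0)^2 = (t 0)^2 + (t 1)^2 + (t 2)^2 - (t 0)^2 :=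
    Real.sq_sqrt (by linarith [sq_nonneg (t 1), sq_nonneg (t 2)])
  have hgsq1 : (g 1)^2 = (t 0)^2 + (t 1)^2 + (t 2)^2 - (t 1)^2 :=
    Real.sq_sqrt (by linarith [sq_nonneg (t 0), sq_nonneg (t 2)])
  have hgsq2 : (g 2)^2 = (t 0)^2 + (t 1)^2 + (t 2)^2 - (t 2)^2 :=
    Real.sq_sqrt (by linarith [sq_nonneg (t 0), sq_nonneg (t 1)])
  have hmle : ∀ k, nh k k ≤ 1 := by
    intro k
    have h5 : (nh k k)^2 ≤ ∑ i, (nh k i)^2 :=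
      Finset.single_le_sum (f := fun i => (nh k i)^2) (fun i _ => sq_nonneg _)
        (Finset.mem_univ k)
    rw [hunit k] at h5
    exact (abs_le_of_sq_le_sq' (by rwa [one_pow]) one_pos.le).2
  have hSm : ∀ k, 1 - (nh k k)^2 ≤ (Real.sin ε)^2 := by
    intro k
    have h2 : (Real.cos ε)^2 ≤ (nh k k)^2 := by
      rw [sq, sq]; exact mul_self_le_mul_self hC0 (hcl k)
    linarith
  have hy0 : (c 0 - nh 0 0 * t 0)^2 ≤ (1 - (nh 0 0)^2) * (g 0)^2 := by
    rw [hcd 0, hgsq0, show (1 - (nh 0 0)^2) = (nh 0 1)^2 + (nh 0 2)^2 by linarith [hun 0]]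
    linarith [sq_nonneg (nh 0 1 * t 2 - nh 0 2 * t 1)]
  have hy1 : (c 1 - nh 1 1 * t 1)^2 ≤ (1 - (nh 1 1)^2) * (g 1)^2 := by
    rw [hcd 1, hgsq1, show (1 - (nh 1 1)^2) = (nh 1 0)^2 + (nh 1 2)^2 by linarith [hun 1]]
    linarith [sq_nonneg (nh 1 0 * t 2 - nh 1 2 * t 0)]
  have hy2 : (c 2 - nh 2 2 * t 2)^2 ≤ (1 - (nh 2 2)^2) * (g 2)^2 := by
    rw [hcd 2, hgsq2, show (1 - (nh 2 2)^2) = (nh 2 0)^2 + (nh 2 1)^2 by linarith [hun 2]]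
    linarith [sq_nonneg (nh 2 0 * t 1 - nh 2 1 * t 0)]
  obtain ⟨a0, b0⟩ := perk (Real.cos ε) (Real.sin ε) ((t 0)^2 + (t 1)^2 + (t 2)^2)
    (t 0) (c 0) (g 0) (nh 0 0) (hg0 0) hgsq0 (hcl 0) (hmle 0) hC0 hS0 (hSm 0) hy0
  obtain ⟨a1, b1⟩ := perk (Real.cos ε) (Real.sin ε) ((t 0)^2 + (t 1)^2 + (t 2)^2)
    (t 1) (c 1) (g 1) (nh 1 1) (hg0 1) hgsq1 (hcl 1) (hmle 1) hC0 hS0 (hSm 1) hy1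
  obtain ⟨a2, b2⟩ := perk (Real.cos ε) (Real.sin ε) ((t 0)^2 + (t 1)^2 + (t 2)^2)
    (t 2) (c 2) (g 2) (nh 2 2) (hg0 2) hgsq2 (hcl 2) (hmle 2) hC0 hS0 (hSm 2) hy2
  -- bound on sum |t k| * g k
  have hT2r : 2*Real.sqrt 2*(abs (t 0) * g 0 + abs (t 1) * g 1 + abs (t 2) * g 2)
      ≤ 4*((t 0)^2 + (t 1)^2 + (t 2)^2) := by
    have u0 := sq_nonneg (Real.sqrt 2 * abs (t 0) - g 0)
    have u1 := sq_nonneg (Real.sqrt 2 * abs (t 1) - g 1)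
    have u2 := sq_nonneg (Real.sqrt 2 * abs (t 2) - g 2)
    have v0 : (Real.sqrt 2)^2*(abs (t 0))^2 = 2*(t 0)^2 := by rw [hr2, sq_abs]
    have v1 : (Real.sqrt 2)^2*(abs (t 1))^2 = 2*(t 1)^2 := by rw [hr2, sq_abs]
    have v2 : (Real.sqrt 2)^2*(abs (t 2))^2 = 2*(t 2)^2 := by rw [hr2, sq_abs]
    linarith [u0, u1, u2, v0, v1, v2, hgsq0, hgsq1, hgsq2]
  have hT : abs (t 0) * g 0 + abs (t 1) * g 1 + abs (t 2) * g 2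
      ≤ Real.sqrt 2*((t 0)^2 + (t 1)^2 + (t 2)^2) := by
    rw [show Real.sqrt 2*((t 0)^2 + (t 1)^2 + (t 2)^2)
        = 4*((t 0)^2 + (t 1)^2 + (t 2)^2)/(2*Real.sqrt 2) by
      rw [eq_div_iff (by positivity)]
      linear_combination 2*((t 0)^2 + (t 1)^2 + (t 2)^2)*hr2]
    rw [le_div_iff₀ (by positivity)]
    linarith [hT2r]
  have hST : Real.sin ε * (abs (t 0) * g 0 + abs (t 1) * g 1 + abs (t 2) * g 2)
      ≤ Real.sin ε * (Real.sqrt 2*((t 0)^2 + (t 1)^2 + (t 2)^2)) :=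
    mul_le_mul_of_nonneg_left hT hS0
  have h1C : (0:ℝ) ≤ 1 - Real.cos ε := by linarith
  have hST2 : (1-Real.cos ε) * (Real.sin ε * (abs (t 0) * g 0 + abs (t 1) * g 1 + abs (t 2) * g 2))
      ≤ (1-Real.cos ε) * (Real.sin ε * (Real.sqrt 2*((t 0)^2 + (t 1)^2 + (t 2)^2))) :=
    mul_le_mul_of_nonneg_left hST h1C
  have hP1 : Real.cos ε*((t 0)^2 + (t 1)^2 + (t 2)^2)
      - Real.sin ε*(Real.sqrt 2*((t 0)^2 + (t 1)^2 + (t 2)^2))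
      ≤ t 0 * c 0 + t 1 * c 1 + t 2 * c 2 := by
    linarith [a0, a1, a2, hST]
  have hQ : (c 0)^2 + (c 1)^2 + (c 2)^2 ≤
      (1+Real.cos ε)*(t 0 * c 0 + t 1 * c 1 + t 2 * c 2)
      + (-Real.cos ε + (1-Real.cos ε)*Real.sin ε*Real.sqrt 2 + 2*(Real.sin ε)^2)
        *((t 0)^2 + (t 1)^2 + (t 2)^2) := by
    have w0 : (Real.sin ε)^2*(g 0)^2 = (Real.sin ε)^2*((t 0)^2 + (t 1)^2 + (t 2)^2 - (t 0)^2) := by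
      linear_combination (Real.sin ε)^2*hgsq0
    have w1 : (Real.sin ε)^2*(g 1)^2 = (Real.sin ε)^2*((t 0)^2 + (t 1)^2 + (t 2)^2 - (t 1)^2) := by
      linear_combination (Real.sin ε)^2*hgsq1
    have w2 : (Real.sin ε)^2*(g 2)^2 = (Real.sin ε)^2*((t 0)^2 + (t 1)^2 + (t 2)^2 - (t 2)^2) := by
      linear_combination (Real.sin ε)^2*hgsq2
    linarith [b0, b1, b2, hST2, w0, w1, w2]
  have hPq : (t 0 * c 0 + t 1 * c 1 + t 2 * c 2)^2
      ≤ ((t 0)^2 + (t 1)^2 + (t 2)^2)*((c 0)^2 + (c 1)^2 + (c 2)^2) := by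
    linarith [sq_nonneg (t 0*c 1 - t 1*c 0), sq_nonneg (t 0*c 2 - t 2*c 0),
      sq_nonneg (t 1*c 2 - t 2*c 1)]
  exact core (Real.cos ε) (Real.sin ε) (Real.sqrt 2)
    ((t 0)^2 + (t 1)^2 + (t 2)^2) (t 0 * c 0 + t 1 * c 1 + t 2 * c 2)
    ((c 0)^2 + (c 1)^2 + (c 2)^2) hr2 hr0 hCS hS0 hC0 hC2 hs0 hs1 hq0 hq1 hP1 hPq hQ

/-- for misalignment ε ∈ [0, arccos √(2/3)], actual unit measurement
directions n̂ₖ with n̂ₖ·eₖ ≥ cos ε, a qubit state τ with Bloch vector t, and the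
linear-inversion reconstruction ρ from the exact data cₖ = n̂ₖ·t (assumed physical,
‖c‖ ≤ 1), the Uhlmann–Jozsa fidelity (tr √(√τ ρ √τ))² is at least
f(ε) = (1 + cos ε − √2 sin ε)/2. -/
theorem stmt18 (ε : ℝ) (hε : ε ∈ Set.Icc 0 (Real.arccos (Real.sqrt (2 / 3))))
    (t : Fin 3 → ℝ) (ht : ∑ i, (t i) ^ 2 ≤ 1)
    (nh : Fin 3 → Fin 3 → ℝ)
    (hunit : ∀ k, ∑ i, (nh k i) ^ 2 = 1)
    (hclose : ∀ k, nh k ⬝ᵥ Pi.single k 1 ≥ Real.cos ε)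
    (c : Fin 3 → ℝ) (hcdef : ∀ k, c k = nh k ⬝ᵥ t) (hc : ∑ i, (c i) ^ 2 ≤ 1)
    (τ ρ : Matrix (Fin 2) (Fin 2) ℂ)
    (hτ : τ = (1 / 2 : ℂ) • ((1 : Matrix (Fin 2) (Fin 2) ℂ) + pvec t))
    (hρ : ρ = (1 / 2 : ℂ) • ((1 : Matrix (Fin 2) (Fin 2) ℂ) + pvec c))
    (hτp : τ.PosSemidef)
    (hmid : (hτp.sqrt * ρ * hτp.sqrt).PosSemidef) :
    ((hmid.sqrt.trace) ^ 2).re ≥ (1 + Real.cos ε - Real.sqrt 2 * Real.sin ε) / 2 := by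
  set s : ℝ := (t 0)^2 + (t 1)^2 + (t 2)^2 with hs_def
  set q : ℝ := (c 0)^2 + (c 1)^2 + (c 2)^2 with hq_def
  set P : ℝ := t 0 * c 0 + t 1 * c 1 + t 2 * c 2 with hP_def
  -- scalar facts (to be proven via scalar lemmas)
  have hs1 : s ≤ 1 := by simpa [Fin.sum_univ_three] using ht
  have hq1 : q ≤ 1 := by simpa [Fin.sum_univ_three] using hc
  have key : Real.cos ε - Real.sqrt 2 * Real.sin ε ≤ P + Real.sqrt ((1-s)*(1-q)) :=
    bridge ε hε t ht nh hunit hclose c hcdef hc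
  -- matrix computations
  have htr : (τ*ρ).trace = (((1 + P)/2 : ℝ) : ℂ) := by
    subst hτ hρ
    simp [Matrix.trace_fin_two, Matrix.mul_apply, Fin.sum_univ_two, pvec, σx, σy, σz,
      Matrix.add_apply, Matrix.smul_apply, Matrix.one_apply, Complex.real_smul, Complex.ext_iff,
      ← Complex.ofReal_pow, ← Complex.ofReal_mul]
    constructor <;> ring
  have hdτ : τ.det = (((1 - s)/4 : ℝ) : ℂ) := by
    subst hτ
    simp [Matrix.det_fin_two, pvec, σx, σy, σz, Matrix.add_apply, Matrix.smul_apply,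
      Matrix.one_apply, Complex.real_smul, Complex.ext_iff, ← Complex.ofReal_pow]
    constructor <;> ring
  have hdρ : ρ.det = (((1 - q)/4 : ℝ) : ℂ) := by
    subst hρ
    simp [Matrix.det_fin_two, pvec, σx, σy, σz, Matrix.add_apply, Matrix.smul_apply,
      Matrix.one_apply, Complex.real_smul, Complex.ext_iff, ← Complex.ofReal_pow]
    constructor <;> ring
  set B := hmid.sqrt with hB_def
  have hBB : B * B = hτp.sqrt * ρ * hτp.sqrt := hmid.sqrt_mul_self
  have htrM : (hτp.sqrt * ρ * hτp.sqrt).trace = (τ*ρ).trace := by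
    rw [Matrix.trace_mul_cycle, hτp.sqrt_mul_self]
  have hdetM : (hτp.sqrt * ρ * hτp.sqrt).det = τ.det * ρ.det := by
    rw [Matrix.det_mul, Matrix.det_mul, mul_comm, ← mul_assoc, ← Matrix.det_mul,
      hτp.sqrt_mul_self]
  -- d : the determinant of B as a real number
  set d : ℝ := ∏ i, (hmid.posSemidef_sqrt.1.eigenvalues i) with hd_def
  have hd0 : 0 ≤ d := Finset.prod_nonneg fun i _ => hmid.posSemidef_sqrt.eigenvalues_nonneg i
  have hdetB : B.det = (d : ℂ) := by
    rw [hmid.posSemidef_sqrt.1.det_eq_prod_eigenvalues]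
    rw [hd_def]
    norm_cast
  have hd2 : (d:ℂ)^2 = (((1-s)/4 * ((1-q)/4) : ℝ) : ℂ) := by
    rw [← hdetB, sq, ← Matrix.det_mul, hBB, hdetM, hdτ, hdρ]
    push_cast
    ring
  have hd2' : d^2 = (1-s)/4 * ((1-q)/4) := by
    exact_mod_cast hd2
  have hid : (B.trace)^2 = (B*B).trace + 2 * B.det := by
    simp [Matrix.trace_fin_two, Matrix.det_fin_two, Matrix.mul_apply, Fin.sum_univ_two]
    ring
  have hre : ((B.trace)^2).re = (1+P)/2 + 2*d := by
    rw [hid, hBB, htrM, htr, hdetB]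
    simp [← Complex.ofReal_mul, ← Complex.ofReal_add]
  rw [hre]
  -- 4d = sqrt((1-s)(1-q))
  have h4d : 4*d = Real.sqrt ((1-s)*(1-q)) := by
    rw [show (1-s)*(1-q) = (4*d)^2 by linear_combination (-16 : ℝ)*hd2',
      Real.sqrt_sq (by linarith)]
  have := key
  rw [← h4d] at this
  linarith
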